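/- Let d ≥ 2 and r_1, …, r_d ∈ ℕ. Let a_{11}, …, a_{dd} be positive reals and let a_{ij} = a_{ji} ∈ ℝ for 1 ≤ i ≠ j ≤ d. Let C be the d×d real symmetric matrix with diagonal entries C_{ii} = a_{ii} and off-diagonal entries C_{ij} = −a_{ij}, and let g(x) = exp(−xᵀCx) for x ∈ ℝ^d. For k = (k_1, …, k_{d−1}) ∈ ℕ^{d−1} with 0 ≤ k_i ≤ r_{i+1} for each i, define the nested polynomial P_k(x) = H_{r_d−k_{d−1}}(S_d(x)) · ∂_d^{k_{d−1}}[ H_{r_{d−1}−k_{d−2}}(S_{d−1}(x)) · ∂_{d−1}^{k_{d−2}}[ ⋯ H_{r_2−k_1}(S_2(x)) · ∂_2^{k_1} H_{r_1}(S_1(x)) ⋯ ] ], where ∂_j^m denotes the m-th partial derivative in the variable x_j. Then for all x ∈ ℝ^d: (A_d*)^{r_d} ⋯ (A_2*)^{r_2} (A_1*)^{r_1} g (x) = (∏_{i=1}^d (1+a_{ii})^{r_i/2}) · Σ_k ( ∏_{i=1}^{d−1} (−1)^{k_i} (1+a_{i+1,i+1})^{−k_i/2} · C(r_{i+1}, k_i)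 ) · P_k(x) · exp(−xᵀCx), where the sum is over all k = (k_1,…,k_{d−1}) ∈ ℕ^{d−1} with 0 ≤ k_i ≤ r_{i+1}, and C(n,k) denotes the binomial coefficient. -/

import Mathlib

/-- The physicists' Hermite polynomial `H_n(x) = (-1)^n e^{x^2} (d^n/dx^n) e^{-x^2}`. -/
noncomputable def Hpoly (n : ℕ) (x : ℝ) : ℝ :=
  (-1 : ℝ) ^ n * Real.exp (x ^ 2) * iteratedDeriv n (fun y => Real.exp (-(y ^ 2))) x

/-- Partial derivative in the `j`-th variable of a function of countably many real
variables (only the first `d` are relevant). -/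
noncomputable def pd (j : ℕ) (f : (ℕ → ℝ) → ℝ) : (ℕ → ℝ) → ℝ :=
  fun x => deriv (fun t => f (Function.update x j t)) (x j)

/-- The creation operator `A_j* f = -∂f/∂x_j + 2 x_j f`. -/
noncomputable def creation (j : ℕ) (f : (ℕ → ℝ) → ℝ) : (ℕ → ℝ) → ℝ :=
  fun x => -(pd j f x) + 2 * x j * f x

/-- `creationChain r n f = (A_{n-1}*)^{r_{n-1}} ⋯ (A_1*)^{r_1} (A_0*)^{r_0} f`
(applying first the creation operator in variable `0`, then in variable `1`, etc.;
indices are `0`-based). -/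
noncomputable def creationChain (r : ℕ → ℕ) : ℕ → ((ℕ → ℝ) → ℝ) → ((ℕ → ℝ) → ℝ)
  | 0, f => f
  | (n + 1), f => (creation n)^[r n] (creationChain r n f)

/-- The quadratic form `xᵀCx` where `C` has diagonal entries `a i i` and off-diagonal
entries `-(a i j)` (indices `0, …, d-1`). -/
noncomputable def Qform (d : ℕ) (a : ℕ → ℕ → ℝ) (x : ℕ → ℝ) : ℝ :=
  ∑ i ∈ Finset.range d, ∑ j ∈ Finset.range d,
    x i * (if i = j then a i i else -(a i j)) * x j

/-- `S_i(x) = ((1+a_{ii}) x_i - ∑_{j ≠ i} a_{ij} x_j) / √(1+a_{ii})` (indices `0`-based,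
with `j` ranging over `{0, …, d-1} \ {i}`). -/
noncomputable def Sfun (d : ℕ) (a : ℕ → ℕ → ℝ) (i : ℕ) (x : ℕ → ℝ) : ℝ :=
  ((1 + a i i) * x i -
      ∑ j ∈ (Finset.range d).filter (fun j => j ≠ i), a i j * x j) /
    Real.sqrt (1 + a i i)

/-- The nested polynomial
`P_k = H_{r_{d-1}-k_{d-2}}(S_{d-1}(x)) ∂_{d-1}^{k_{d-2}}[ ⋯ H_{r_1-k_0}(S_1(x)) ∂_1^{k_0} H_{r_0}(S_0(x)) ⋯ ]`
(`0`-based indices); the value `Pnest d a r k ℓ` is the nesting up to level `ℓ`. -/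
noncomputable def Pnest (d : ℕ) (a : ℕ → ℕ → ℝ) (r k : ℕ → ℕ) : ℕ → (ℕ → ℝ) → ℝ
  | 0 => fun x => Hpoly (r 0) (Sfun d a 0 x)
  | (i + 1) => fun x =>
      Hpoly (r (i + 1) - k i) (Sfun d a (i + 1) x) *
        ((pd (i + 1))^[k i] (Pnest d a r k i)) x

/-- Extension of a tuple `k : Fin (d-1) → ℕ` to a function `ℕ → ℕ` (by `0`). -/
def ext (d : ℕ) (k : Fin (d - 1) → ℕ) (n : ℕ) : ℕ :=
  if h : n < d - 1 then k ⟨n, h⟩ else 0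

namespace StmtAux

noncomputable def hermP : ℕ → Polynomial ℝ
  | 0 => 1
  | n + 1 => 2 * Polynomial.X * hermP n - Polynomial.derivative (hermP n)

lemma iteratedDeriv_gauss (n : ℕ) :
    iteratedDeriv n (fun y : ℝ => Real.exp (-(y ^ 2))) =
      fun x => (-1 : ℝ) ^ n * (hermP n).eval x * Real.exp (-(x ^ 2)) := by
  induction n with
  | zero => funext x; simp [hermP]
  | succ n ih =>
    rw [iteratedDeriv_succ, ih]
    funext x
    have h1 : HasDerivAt (fun x : ℝ => -(x ^ 2)) (-(2 * x)) x := by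
      simpa using (hasDerivAt_pow 2 x).fun_neg
    have hg : HasDerivAt (fun x : ℝ => Real.exp (-(x ^ 2)))
        (Real.exp (-(x ^ 2)) * (-(2 * x))) x := h1.exp
    have hp : HasDerivAt (fun x : ℝ => (-1 : ℝ) ^ n * (hermP n).eval x)
        ((-1 : ℝ) ^ n * (hermP n).derivative.eval x) x :=
      ((hermP n).hasDerivAt x).const_mul _
    rw [(hp.fun_mul hg).deriv]
    simp only [hermP, Polynomial.eval_sub, Polynomial.eval_mul, Polynomial.eval_X,
      Polynomial.eval_ofNat, pow_succ]
    ring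


lemma Hpoly_eq (n : ℕ) (x : ℝ) : Hpoly n x = (hermP n).eval x := by
  unfold Hpoly
  rw [iteratedDeriv_gauss]
  have h : Real.exp (x ^ 2) * Real.exp (-(x ^ 2)) = 1 := by
    rw [← Real.exp_add]; simp
  have h1 : ((-1 : ℝ) ^ n) ^ 2 = 1 := by
    rw [← pow_mul, mul_comm, pow_mul]; norm_num
  have h2 : (-1 : ℝ) ^ n * Real.exp (x ^ 2) *
      ((-1 : ℝ) ^ n * (hermP n).eval x * Real.exp (-(x ^ 2))) =
      ((-1 : ℝ) ^ n) ^ 2 * (Real.exp (x ^ 2) * Real.exp (-(x ^ 2))) * (hermP n).eval x := by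
    ring
  rw [h2, h1, h, one_mul, one_mul]

lemma contDiff_polyeval (p : Polynomial ℝ) {n : ℕ∞} : ContDiff ℝ n fun x : ℝ => p.eval x := by
  induction p using Polynomial.induction_on' with
  | add p q hp hq => simpa [Polynomial.eval_add] using hp.add hq
  | monomial k c =>
      simpa [Polynomial.eval_monomial] using (contDiff_const (c := c)).mul (contDiff_id.pow k)

def Adm (d : ℕ) (P : (ℕ → ℝ) → ℝ) : Prop :=
  ∃ F : (Fin d → ℝ) → ℝ, (∀ n : ℕ, ContDiff ℝ n F) ∧ ∀ x, P x = F (fun i => x i)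

variable {d : ℕ} {a : ℕ → ℕ → ℝ}

lemma Adm.congr {P Q : (ℕ → ℝ) → ℝ} (hP : Adm d P) (h : ∀ x, Q x = P x) : Adm d Q := by
  obtain ⟨F, hF, hFx⟩ := hP
  exact ⟨F, hF, fun x => (h x).trans (hFx x)⟩

lemma Adm.const (c : ℝ) : Adm d (fun _ => c) := ⟨fun _ => c, fun _ => contDiff_const, fun _ => rfl⟩

lemma Adm.mul {P Q : (ℕ → ℝ) → ℝ} (hP : Adm d P) (hQ : Adm d Q) :
    Adm d (fun x => P x * Q x) := by
  obtain ⟨F, hF, hFx⟩ := hP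
  obtain ⟨G, hG, hGx⟩ := hQ
  exact ⟨fun v => F v * G v, fun n => (hF n).mul (hG n), fun x => by simp only []; rw [hFx, hGx]⟩

lemma Adm.sum {ι : Type*} (s : Finset ι) (f : ι → (ℕ → ℝ) → ℝ)
    (hf : ∀ i ∈ s, Adm d (f i)) : Adm d (fun x => ∑ i ∈ s, f i x) := by
  classical
  induction s using Finset.induction_on with
  | empty => exact (Adm.const 0).congr (fun x => by simp)
  | @insert b s' hnot ih =>
      have h1 : Adm d (f b) := hf b (Finset.mem_insert_self _ _)
      have h2 : Adm d (fun x => ∑ i ∈ s', f i x) :=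
        ih (fun i hi => hf i (Finset.mem_insert_of_mem hi))
      obtain ⟨F, hF, hFx⟩ := h1
      obtain ⟨G, hG, hGx⟩ := h2
      refine ⟨fun v => F v + G v, fun n => (hF n).add (hG n), fun x => ?_⟩
      simp only []; rw [Finset.sum_insert hnot, hFx]; exact congrArg _ (hGx x)


lemma proj_update (x : ℕ → ℝ) {j : ℕ} (hj : j < d) (t : ℝ) :
    (fun i : Fin d => Function.update x j t i) =
      Function.update (fun i : Fin d => x i) ⟨j, hj⟩ t := by
  funext i
  rcases eq_or_ne (i : ℕ) j with h | h
  · have hi : i = (⟨j, hj⟩ : Fin d) := Fin.ext h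
    subst hi
    simp
  · have hi : i ≠ (⟨j, hj⟩ : Fin d) := by simpa [Fin.ext_iff] using h
    simp only [Function.update_of_ne h, Function.update_of_ne hi]

lemma Adm.core {P : (ℕ → ℝ) → ℝ} (hP : Adm d P) {j : ℕ} (hj : j < d) :
    Adm d (pd j P) ∧
      ∀ x : ℕ → ℝ, HasDerivAt (fun t => P (Function.update x j t)) (pd j P x) (x j) := by
  obtain ⟨F, hF, hFx⟩ := hP
  set e : Fin d → ℝ := Pi.single ⟨j, hj⟩ (1 : ℝ) with he
  have key : ∀ (x : ℕ → ℝ),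
      HasDerivAt (fun t => P (Function.update x j t))
        (fderiv ℝ F (fun i : Fin d => x i) e) (x j) := by
    intro x
    set v : Fin d → ℝ := fun i : Fin d => x i with hv
    have hline : ∀ t : ℝ, Function.update v ⟨j, hj⟩ t = v + (t - x j) • e := by
      intro t; funext i
      rcases eq_or_ne i ⟨j, hj⟩ with h | h
      · subst h
        simp [he, hv]
      · simp [Function.update_of_ne h, he, Pi.single_eq_of_ne h]
    have hγ : HasDerivAt (fun t : ℝ => v + (t - x j) • e) ((1 : ℝ) • e) (x j) :=
      (((hasDerivAt_id (x j)).sub_const (x j)).smul_const e).const_add v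
    have hFd : HasFDerivAt F (fderiv ℝ F v) (v + ((x j) - x j) • e) := by
      have : v + ((x j) - x j) • e = v := by simp
      rw [this]
      exact (((hF 1).differentiable (by norm_cast)) v).hasFDerivAt
    have hcomp := hFd.comp_hasDerivAt (x j) hγ
    have hfun : (fun t : ℝ => F (v + (t - x j) • e)) =
        fun t => P (Function.update x j t) := by
      funext t
      rw [hFx, proj_update x hj, hline]
    rw [one_smul] at hcomp
    rw [← hfun]
    exact hcomp
  constructor
  · refine ⟨fun v => fderiv ℝ F v e, fun n => ?_, fun x => ?_⟩
    · exact (ContinuousLinearMap.apply ℝ ℝ e).contDiff.comp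
        ((hF (n + 1)).fderiv_right (by norm_cast))
    · exact (key x).deriv
  · intro x
    have := (key x).deriv
    rw [pd, this]
    exact key x

lemma Adm.pd_adm {P : (ℕ → ℝ) → ℝ} (hP : Adm d P) {j : ℕ} (hj : j < d) : Adm d (pd j P) :=
  (hP.core hj).1

lemma Adm.hasDerivAt_slice {P : (ℕ → ℝ) → ℝ} (hP : Adm d P) {j : ℕ} (hj : j < d)
    (x : ℕ → ℝ) :
    HasDerivAt (fun t => P (Function.update x j t)) (pd j P x) (x j) :=
  (hP.core hj).2 x

lemma Adm.iterate_pd {P : (ℕ → ℝ) → ℝ} (hP : Adm d P) {j : ℕ} (hj : j < d) (k : ℕ) :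
    Adm d ((pd j)^[k] P) := by
  induction k with
  | zero => exact hP
  | succ k ih => rw [Function.iterate_succ_apply']; exact ih.pd_adm hj


lemma Adm_polyS (a : ℕ → ℕ → ℝ) (p : Polynomial ℝ) {i : ℕ} (hi : i < d) :
    Adm d (fun x => p.eval (Sfun d a i x)) := by
  classical
  refine ⟨fun v => p.eval (((1 + a i i) * v ⟨i, hi⟩ -
      ∑ j ∈ Finset.univ.filter (fun j : Fin d => (j : ℕ) ≠ i), a i (j : ℕ) * v j) /
      Real.sqrt (1 + a i i)), fun n => ?_, fun x => ?_⟩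
  · have hlin : ContDiff ℝ n (fun v : Fin d → ℝ =>
        ((1 + a i i) * v ⟨i, hi⟩ -
          ∑ j ∈ Finset.univ.filter (fun j : Fin d => (j : ℕ) ≠ i), a i (j : ℕ) * v j) /
          Real.sqrt (1 + a i i)) := by
      apply ContDiff.div_const
      apply ContDiff.sub
      · exact contDiff_const.mul ((ContinuousLinearMap.proj (⟨i, hi⟩ : Fin d) :
          (Fin d → ℝ) →L[ℝ] ℝ).contDiff)
      · exact ContDiff.sum fun j _ => contDiff_const.mul
          ((ContinuousLinearMap.proj j : (Fin d → ℝ) →L[ℝ] ℝ).contDiff)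
    exact (contDiff_polyeval p).comp hlin
  · simp only [Sfun]
    congr 2
    rw [Finset.sum_filter, Finset.sum_filter,
      ← Fin.sum_univ_eq_sum_range (fun j => if j ≠ i then a i j * x j else 0) d]

lemma gauss_hasDerivAt (hsymm : ∀ i < d, ∀ j < d, a i j = a j i)
    (hpos : ∀ i < d, 0 < a i i) {j : ℕ} (hj : j < d) (x : ℕ → ℝ) :
    HasDerivAt (fun t => Real.exp (-(Qform d a (Function.update x j t))))
      ((2 * x j - 2 * Real.sqrt (1 + a j j) * Sfun d a j x) *
        Real.exp (-(Qform d a x))) (x j) := by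
  classical
  set C : ℕ → ℕ → ℝ := fun i m => if i = m then a i i else -(a i m) with hC
  have hu : ∀ i : ℕ, HasDerivAt (fun t => Function.update x j t i)
      (if i = j then (1 : ℝ) else 0) (x j) := by
    intro i
    by_cases h : i = j
    · have : (fun t => Function.update x j t i) = fun t : ℝ => t := by
        funext t; rw [h, Function.update_self]
      rw [this, if_pos h]
      exact hasDerivAt_id (x j)
    · simpa [Function.update_of_ne h, h] using hasDerivAt_const (x j) (x i)
  have hterm : ∀ i m : ℕ, HasDerivAt
      (fun t => Function.update x j t i * C i m * Function.update x j t m)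
      ((if i = j then (1:ℝ) else 0) * C i m * x m
        + x i * C i m * (if m = j then (1:ℝ) else 0)) (x j) := by
    intro i m
    have h := ((hu i).mul_const (C i m)).fun_mul (hu m)
    simpa [Function.update_eq_self] using h
  have hQd : HasDerivAt (fun t => Qform d a (Function.update x j t))
      (∑ i ∈ Finset.range d, ∑ m ∈ Finset.range d,
        ((if i = j then (1:ℝ) else 0) * C i m * x m
          + x i * C i m * (if m = j then (1:ℝ) else 0))) (x j) := by
    apply HasDerivAt.fun_sum
    intro i _
    exact HasDerivAt.fun_sum fun m _ => hterm i m
  have hD : (∑ i ∈ Finset.range d, ∑ m ∈ Finset.range d,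
        ((if i = j then (1:ℝ) else 0) * C i m * x m
          + x i * C i m * (if m = j then (1:ℝ) else 0)))
      = 2 * ∑ m ∈ Finset.range d, C j m * x m := by
    have hsum : (∑ i ∈ Finset.range d, ∑ m ∈ Finset.range d,
        ((if i = j then (1:ℝ) else 0) * C i m * x m
          + x i * C i m * (if m = j then (1:ℝ) else 0)))
        = (∑ i ∈ Finset.range d, ∑ m ∈ Finset.range d,
            (if i = j then (1:ℝ) else 0) * C i m * x m)
          + ∑ i ∈ Finset.range d, ∑ m ∈ Finset.range d,
            x i * C i m * (if m = j then (1:ℝ) else 0) := by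
      rw [← Finset.sum_add_distrib]
      exact Finset.sum_congr rfl fun i _ => by rw [← Finset.sum_add_distrib]
    have e1 : (∑ i ∈ Finset.range d, ∑ m ∈ Finset.range d,
        (if i = j then (1:ℝ) else 0) * C i m * x m)
        = ∑ m ∈ Finset.range d, C j m * x m := by
      have h1 : ∀ i ∈ Finset.range d, (∑ m ∈ Finset.range d,
          (if i = j then (1:ℝ) else 0) * C i m * x m)
          = if i = j then ∑ m ∈ Finset.range d, C j m * x m else 0 := by
        intro i _
        split_ifs with h
        · subst h; simp
        · simp
      rw [Finset.sum_congr rfl h1, Finset.sum_ite_eq' (Finset.range d) j,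
        if_pos (Finset.mem_range.mpr hj)]
    have e2 : (∑ i ∈ Finset.range d, ∑ m ∈ Finset.range d,
        x i * C i m * (if m = j then (1:ℝ) else 0))
        = ∑ m ∈ Finset.range d, C j m * x m := by
      have h1 : ∀ i ∈ Finset.range d, (∑ m ∈ Finset.range d,
          x i * C i m * (if m = j then (1:ℝ) else 0)) = C j i * x i := by
        intro i hi
        have h2 : ∀ m ∈ Finset.range d, x i * C i m * (if m = j then (1:ℝ) else 0)
            = if m = j then x i * C i m else 0 := by
          intro m _; split_ifs <;> ring
        rw [Finset.sum_congr rfl h2, Finset.sum_ite_eq' (Finset.range d) j,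
          if_pos (Finset.mem_range.mpr hj)]
        have hij : C i j = C j i := by
          simp only [hC]
          rcases eq_or_ne i j with h | h
          · subst h; simp
          · rw [if_neg h, if_neg (Ne.symm h),
              hsymm i (Finset.mem_range.mp hi) j hj]
        rw [hij]; ring
      rw [Finset.sum_congr rfl h1]
    rw [hsum, e1, e2]; ring
  have hQd2 : HasDerivAt (fun t => Qform d a (Function.update x j t))
      (2 * ∑ m ∈ Finset.range d, C j m * x m) (x j) := hD ▸ hQd
  have hE : HasDerivAt (fun t => Real.exp (-(Qform d a (Function.update x j t))))
      (Real.exp (-(Qform d a x)) * (-(2 * ∑ m ∈ Finset.range d, C j m * x m))) (x j) := by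
    have := (hQd2.neg).exp
    simpa [Function.update_eq_self] using this
  have hc : (0:ℝ) < 1 + a j j := by have := hpos j hj; linarith
  have hsq : Real.sqrt (1 + a j j) ≠ 0 := by positivity
  have hS : Real.sqrt (1 + a j j) * Sfun d a j x
      = (1 + a j j) * x j
        - ∑ m ∈ (Finset.range d).filter (fun m => m ≠ j), a j m * x m := by
    rw [Sfun, mul_comm, div_mul_cancel₀ _ hsq]
  have hsplit : (∑ m ∈ Finset.range d, C j m * x m)
      = a j j * x j - ∑ m ∈ (Finset.range d).filter (fun m => m ≠ j), a j m * x m := by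
    have h1 : ∀ m ∈ Finset.range d, C j m * x m
        = (if m = j then a j j * x j else 0) + (if m ≠ j then -(a j m * x m) else 0) := by
      intro m _
      rcases eq_or_ne m j with h | h
      · subst h; simp [hC]
      · simp only [hC, if_neg (Ne.symm h), if_neg h, if_pos h]
        ring
    rw [Finset.sum_congr rfl h1, Finset.sum_add_distrib,
      Finset.sum_ite_eq' (Finset.range d) j, if_pos (Finset.mem_range.mpr hj),
      ← Finset.sum_filter]
    rw [Finset.sum_neg_distrib]
    ring
  have hcoef : Real.exp (-(Qform d a x)) * (-(2 * ∑ m ∈ Finset.range d, C j m * x m))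
      = (2 * x j - 2 * Real.sqrt (1 + a j j) * Sfun d a j x) * Real.exp (-(Qform d a x)) := by
    rw [hsplit]
    have : 2 * Real.sqrt (1 + a j j) * Sfun d a j x
        = 2 * ((1 + a j j) * x j
          - ∑ m ∈ (Finset.range d).filter (fun m => m ≠ j), a j m * x m) := by
      rw [mul_assoc, hS]
    rw [this]; ring
  rw [← hcoef]
  exact hE


lemma Sfun_slice_hasDerivAt (hpos : ∀ i < d, 0 < a i i) {j : ℕ} (hj : j < d) (x : ℕ → ℝ) :
    HasDerivAt (fun t => Sfun d a j (Function.update x j t))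
      (Real.sqrt (1 + a j j)) (x j) := by
  have hc : (0:ℝ) < 1 + a j j := by have := hpos j hj; linarith
  have hfun : (fun t => Sfun d a j (Function.update x j t))
      = fun t => ((1 + a j j) * t -
          ∑ m ∈ (Finset.range d).filter (fun m => m ≠ j), a j m * x m) /
        Real.sqrt (1 + a j j) := by
    funext t
    rw [Sfun]
    congr 2
    · rw [Function.update_self]
    · refine Finset.sum_congr rfl fun m hm => ?_
      rw [Function.update_of_ne (Finset.mem_filter.mp hm).2]
  rw [hfun]
  have h1 : HasDerivAt (fun t : ℝ => (1 + a j j) * t) (1 + a j j) (x j) := by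
    simpa using (hasDerivAt_id (x j)).const_mul (1 + a j j)
  have h2 := (h1.sub_const
    (∑ m ∈ (Finset.range d).filter (fun m => m ≠ j), a j m * x m)).div_const
    (Real.sqrt (1 + a j j))
  have : (1 + a j j) / Real.sqrt (1 + a j j) = Real.sqrt (1 + a j j) :=
    Real.div_sqrt
  rwa [this] at h2

lemma creation_step (hsymm : ∀ i < d, ∀ j < d, a i j = a j i)
    (hpos : ∀ i < d, 0 < a i i) {j : ℕ} (hj : j < d)
    {P : (ℕ → ℝ) → ℝ} (hP : Adm d P) (p : Polynomial ℝ) (x : ℕ → ℝ) :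
    creation j (fun y => P y * (p.eval (Sfun d a j y) * Real.exp (-(Qform d a y)))) x
      = Real.sqrt (1 + a j j) *
          (P x * ((2 * Polynomial.X * p - Polynomial.derivative p).eval (Sfun d a j x) *
            Real.exp (-(Qform d a x))))
        - pd j P x * (p.eval (Sfun d a j x) * Real.exp (-(Qform d a x))) := by
  have h1 := hP.hasDerivAt_slice hj x
  have hlin := Sfun_slice_hasDerivAt hpos hj x
  have hpe : HasDerivAt (fun t => p.eval (Sfun d a j (Function.update x j t)))
      ((Polynomial.derivative p).eval (Sfun d a j x) * Real.sqrt (1 + a j j)) (x j) := by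
    have hval : Sfun d a j (Function.update x j (x j)) = Sfun d a j x := by
      rw [Function.update_eq_self]
    have hp2 : HasDerivAt (fun y : ℝ => p.eval y)
        ((Polynomial.derivative p).eval (Sfun d a j (Function.update x j (x j))))
        (Sfun d a j (Function.update x j (x j))) := p.hasDerivAt _
    have := hp2.comp (x j) hlin
    rwa [hval] at this
  have hE := gauss_hasDerivAt hsymm hpos hj x
  have total := h1.fun_mul (hpe.fun_mul hE)
  have htotal : HasDerivAt
      (fun t => P (Function.update x j t) *
        (p.eval (Sfun d a j (Function.update x j t)) *
          Real.exp (-(Qform d a (Function.update x j t)))))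
      (pd j P x * (p.eval (Sfun d a j x) * Real.exp (-(Qform d a x)))
        + P x * ((Polynomial.derivative p).eval (Sfun d a j x) * Real.sqrt (1 + a j j) *
            Real.exp (-(Qform d a x))
          + p.eval (Sfun d a j x) *
            ((2 * x j - 2 * Real.sqrt (1 + a j j) * Sfun d a j x) *
              Real.exp (-(Qform d a x))))) (x j) := by
    simpa [Function.update_eq_self] using total
  simp only [creation, pd]
  rw [htotal.deriv, h1.deriv]
  simp only [Polynomial.eval_sub, Polynomial.eval_mul, Polynomial.eval_X,
    Polynomial.eval_ofNat]
  ring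


lemma pd_sum {ι : Type*} (s : Finset ι) (f : ι → (ℕ → ℝ) → ℝ) {j : ℕ} (x : ℕ → ℝ)
    (hf : ∀ i ∈ s, DifferentiableAt ℝ (fun t => f i (Function.update x j t)) (x j)) :
    pd j (fun y => ∑ i ∈ s, f i y) x = ∑ i ∈ s, pd j (f i) x := by
  simp only [pd]
  exact deriv_fun_sum hf

lemma creation_sum {ι : Type*} (s : Finset ι) (f : ι → (ℕ → ℝ) → ℝ) {j : ℕ} (x : ℕ → ℝ)
    (hf : ∀ i ∈ s, DifferentiableAt ℝ (fun t => f i (Function.update x j t)) (x j)) :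
    creation j (fun y => ∑ i ∈ s, f i y) x = ∑ i ∈ s, creation j (f i) x := by
  simp only [creation]
  rw [pd_sum s f x hf, Finset.sum_add_distrib, ← Finset.sum_neg_distrib, Finset.mul_sum]

lemma pd_const_mul (c : ℝ) (f : (ℕ → ℝ) → ℝ) {j : ℕ} (x : ℕ → ℝ) :
    pd j (fun y => c * f y) x = c * pd j f x := by
  simp only [pd]
  exact deriv_const_mul_field c

lemma creation_const_mul (c : ℝ) (f : (ℕ → ℝ) → ℝ) {j : ℕ} (x : ℕ → ℝ) :
    creation j (fun y => c * f y) x = c * creation j f x := by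
  simp only [creation, pd_const_mul]
  ring

lemma pd_iter_sum {ι : Type*} (s : Finset ι) (f : ι → (ℕ → ℝ) → ℝ) {j : ℕ} (hj : j < d)
    (hf : ∀ i ∈ s, Adm d (f i)) (c : ι → ℝ) (k : ℕ) :
    (pd j)^[k] (fun y => ∑ i ∈ s, c i * f i y)
      = fun y => ∑ i ∈ s, c i * ((pd j)^[k] (f i)) y := by
  induction k generalizing f with
  | zero => simp
  | succ k ih =>
    rw [Function.iterate_succ_apply]
    have h1 : pd j (fun y => ∑ i ∈ s, c i * f i y)
        = fun y => ∑ i ∈ s, c i * pd j (f i) y := by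
      funext x
      rw [pd_sum s (fun i y => c i * f i y) x (fun i hi => ?_)]
      · exact Finset.sum_congr rfl fun i hi => pd_const_mul (c i) (f i) x
      · exact (((hf i hi).hasDerivAt_slice hj x).differentiableAt).const_mul (c i)
    rw [h1, ih (fun i => pd j (f i)) (fun i hi => (hf i hi).pd_adm hj)]
    funext y
    refine Finset.sum_congr rfl fun i hi => ?_
    rw [Function.iterate_succ_apply]


lemma sum_step (γ H u : ℕ → ℝ) (sqc : ℝ) (hγ : ∀ m, γ (m + 1) = γ m * sqc) (n : ℕ) :
    ∑ k ∈ Finset.range (n + 1),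
      ((n.choose k : ℝ) * (-1) ^ k * γ (n - k)) *
        (sqc * (u k * H (n - k + 1)) - u (k + 1) * H (n - k))
    = ∑ k ∈ Finset.range (n + 2),
      (((n + 1).choose k : ℝ) * (-1) ^ k * γ (n + 1 - k)) * (u k * H (n + 1 - k)) := by
  set A' : ℕ → ℝ := fun k =>
    ((n.choose k : ℝ) * (-1) ^ k * γ (n + 1 - k)) * (u k * H (n + 1 - k)) with hA'
  set B' : ℕ → ℝ := fun k => if k = 0 then 0 else
    -(((n.choose (k - 1) : ℝ) * (-1) ^ (k - 1) * γ (n - (k - 1))) *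
      (u k * H (n - (k - 1)))) with hB'
  have hL : ∀ k ∈ Finset.range (n + 1),
      ((n.choose k : ℝ) * (-1) ^ k * γ (n - k)) *
        (sqc * (u k * H (n - k + 1)) - u (k + 1) * H (n - k))
      = A' k + B' (k + 1) := by
    intro k hk
    have hk' : k ≤ n := Nat.lt_succ_iff.mp (Finset.mem_range.mp hk)
    have h1 : n + 1 - k = (n - k) + 1 := by omega
    have h2 : γ (n + 1 - k) = γ (n - k) * sqc := by rw [h1, hγ]
    simp only [hA', hB', if_neg (Nat.succ_ne_zero k), Nat.add_sub_cancel, h1, hγ]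
    ring
  rw [Finset.sum_congr rfl hL, Finset.sum_add_distrib]
  have hf : ∀ k ∈ Finset.range (n + 2),
      (((n + 1).choose k : ℝ) * (-1) ^ k * γ (n + 1 - k)) * (u k * H (n + 1 - k))
      = A' k + B' k := by
    intro k _
    cases k with
    | zero => simp [hA', hB']
    | succ k =>
      have hch : ((n + 1).choose (k + 1) : ℝ) = (n.choose k : ℝ) + (n.choose (k + 1) : ℝ) := by
        rw [Nat.choose_succ_succ]; push_cast; ring
      have h3 : n + 1 - (k + 1) = n - k := by omega
      simp only [hA', hB', if_neg (Nat.succ_ne_zero k), Nat.add_sub_cancel, hch, h3]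
      ring
  rw [Finset.sum_congr rfl hf, Finset.sum_add_distrib, Finset.sum_range_succ A' (n + 1),
    Finset.sum_range_succ' B' (n + 1)]
  have hAlast : A' (n + 1) = 0 := by
    simp [hA', Nat.choose_succ_self]
  have hB0 : B' 0 = 0 := by simp [hB']
  rw [hAlast, hB0]
  ring


lemma iter_creation (hsymm : ∀ i < d, ∀ j < d, a i j = a j i)
    (hpos : ∀ i < d, 0 < a i i) {j : ℕ} (hj : j < d)
    {P : (ℕ → ℝ) → ℝ} (hP : Adm d P) (n : ℕ) :
    (creation j)^[n] (fun y => P y * Real.exp (-(Qform d a y)))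
      = fun y => ∑ k ∈ Finset.range (n + 1),
          ((n.choose k : ℝ) * (-1) ^ k * ((1 + a j j) ^ (((n - k : ℕ) : ℝ) / 2))) *
            ((pd j)^[k] P y *
              ((hermP (n - k)).eval (Sfun d a j y) * Real.exp (-(Qform d a y)))) := by
  have hc : (0:ℝ) < 1 + a j j := by have := hpos j hj; linarith
  induction n with
  | zero =>
    funext y
    rw [Function.iterate_zero_apply]
    simp [hermP]
  | succ n ih =>
    rw [Function.iterate_succ_apply', ih]
    funext x
    have hAdm : ∀ k : ℕ, Adm d ((pd j)^[k] P) := hP.iterate_pd hj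
    have hpoly : ∀ (q : Polynomial ℝ),
        DifferentiableAt ℝ (fun t => q.eval (Sfun d a j (Function.update x j t))) (x j) := by
      intro q
      exact ((q.hasDerivAt (Sfun d a j (Function.update x j (x j)))).comp (x j)
        (Sfun_slice_hasDerivAt hpos hj x)).differentiableAt
    have hdiff : ∀ k ∈ Finset.range (n + 1), DifferentiableAt ℝ
        (fun t => ((n.choose k : ℝ) * (-1) ^ k * ((1 + a j j) ^ (((n - k : ℕ) : ℝ) / 2))) *
          ((pd j)^[k] P (Function.update x j t) *
            ((hermP (n - k)).eval (Sfun d a j (Function.update x j t)) *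
              Real.exp (-(Qform d a (Function.update x j t)))))) (x j) := by
      intro k _
      exact (((((hAdm k).hasDerivAt_slice hj x).differentiableAt).mul
        ((hpoly (hermP (n - k))).mul
          (gauss_hasDerivAt hsymm hpos hj x).differentiableAt))).const_mul _
    rw [creation_sum _ _ x hdiff]
    have hstep : ∀ k ∈ Finset.range (n + 1),
        creation j (fun y =>
          ((n.choose k : ℝ) * (-1) ^ k * ((1 + a j j) ^ (((n - k : ℕ) : ℝ) / 2))) *
            ((pd j)^[k] P y *
              ((hermP (n - k)).eval (Sfun d a j y) * Real.exp (-(Qform d a y))))) x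
        = ((n.choose k : ℝ) * (-1) ^ k * ((1 + a j j) ^ (((n - k : ℕ) : ℝ) / 2))) *
            (Real.sqrt (1 + a j j) *
              ((pd j)^[k] P x *
                ((hermP (n - k + 1)).eval (Sfun d a j x) * Real.exp (-(Qform d a x))))
              - (pd j)^[k + 1] P x *
                ((hermP (n - k)).eval (Sfun d a j x) * Real.exp (-(Qform d a x)))) := by
      intro k _
      rw [creation_const_mul, creation_step hsymm hpos hj (hAdm k) (hermP (n - k)) x]
      have h1 : 2 * Polynomial.X * hermP (n - k) - Polynomial.derivative (hermP (n - k))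
          = hermP (n - k + 1) := rfl
      rw [h1, ← Function.iterate_succ_apply' (pd j) k P]
    rw [Finset.sum_congr rfl hstep]
    have hγ : ∀ m : ℕ, (1 + a j j) ^ (((m + 1 : ℕ) : ℝ) / 2)
        = (1 + a j j) ^ (((m : ℕ) : ℝ) / 2) * Real.sqrt (1 + a j j) := by
      intro m
      rw [Real.sqrt_eq_rpow, ← Real.rpow_add hc]
      congr 1
      push_cast
      ring
    have := sum_step (fun m => (1 + a j j) ^ ((m : ℝ) / 2))
      (fun m => (hermP m).eval (Sfun d a j x) * Real.exp (-(Qform d a x)))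
      (fun k => (pd j)^[k] P x) (Real.sqrt (1 + a j j)) hγ n
    exact this


lemma sum_piFinset_succ {M : Type*} [AddCommMonoid M] (m : ℕ) (s : ℕ → ℕ)
    (G : (Fin (m + 1) → ℕ) → M) :
    ∑ K ∈ Fintype.piFinset (fun i : Fin (m + 1) => Finset.range (s i.1)), G K =
      ∑ t ∈ Finset.range (s m),
        ∑ k ∈ Fintype.piFinset (fun i : Fin m => Finset.range (s i.1)),
          G (Fin.snoc k t) := by
  classical
  rw [← Finset.sum_product']
  refine Finset.sum_nbij' (i := fun K => (K (Fin.last m), fun i : Fin m => K i.castSucc))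
    (j := fun p => Fin.snoc p.2 p.1) ?_ ?_ ?_ ?_ ?_
  · intro K hK
    rw [Fintype.mem_piFinset] at hK
    rw [Finset.mem_product]
    constructor
    · simpa using hK (Fin.last m)
    · rw [Fintype.mem_piFinset]
      intro i
      simpa using hK i.castSucc
  · intro p hp
    rw [Finset.mem_product] at hp
    rw [Fintype.mem_piFinset]
    intro i
    induction i using Fin.lastCases with
    | last => simpa [Fin.snoc_last] using hp.1
    | cast i =>
        have := Fintype.mem_piFinset.mp hp.2 i
        simpa [Fin.snoc_castSucc] using this
  · intro K _
    funext i
    induction i using Fin.lastCases with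
    | last => simp [Fin.snoc_last]
    | cast i => simp [Fin.snoc_castSucc]
  · intro p _
    ext
    · simp [Fin.snoc_last]
    · simp [Fin.snoc_castSucc]
  · intro K _
    congr 1
    funext i
    induction i using Fin.lastCases with
    | last => simp [Fin.snoc_last]
    | cast i => simp [Fin.snoc_castSucc]


def extF (m : ℕ) (k : Fin m → ℕ) (n : ℕ) : ℕ := if h : n < m then k ⟨n, h⟩ else 0

lemma extF_snoc_lt (m : ℕ) (k : Fin m → ℕ) (t : ℕ) {i : ℕ} (hi : i < m) :
    extF (m + 1) (Fin.snoc k t) i = extF m k i := by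
  rw [extF, extF, dif_pos hi, dif_pos (by omega : i < m + 1)]
  have : (⟨i, by omega⟩ : Fin (m + 1)) = Fin.castSucc ⟨i, hi⟩ := rfl
  rw [this, Fin.snoc_castSucc]

lemma extF_snoc_last (m : ℕ) (k : Fin m → ℕ) (t : ℕ) :
    extF (m + 1) (Fin.snoc k t) m = t := by
  rw [extF, dif_pos (by omega : m < m + 1)]
  have : (⟨m, by omega⟩ : Fin (m + 1)) = Fin.last m := rfl
  rw [this, Fin.snoc_last]

lemma Pnest_congr (d : ℕ) (a : ℕ → ℕ → ℝ) (r : ℕ → ℕ) {k1 k2 : ℕ → ℕ} :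
    ∀ m, (∀ i, i < m → k1 i = k2 i) → Pnest d a r k1 m = Pnest d a r k2 m := by
  intro m
  induction m with
  | zero => intro _; rfl
  | succ m ih =>
    intro h
    show Pnest d a r k1 (m + 1) = Pnest d a r k2 (m + 1)
    simp only [Pnest]
    rw [ih (fun i hi => h i (by omega)), h m (by omega)]

lemma Adm_Pnest {d : ℕ} (a : ℕ → ℕ → ℝ) (r k : ℕ → ℕ) :
    ∀ m, m < d → Adm d (Pnest d a r k m) := by
  intro m
  induction m with
  | zero =>
    intro h0
    have := Adm_polyS (d := d) a (hermP (r 0)) (i := 0) h0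
    exact this.congr (fun x => by simp only [Pnest]; rw [Hpoly_eq])
  | succ m ih =>
    intro hm
    have h1 : Adm d (fun x => (hermP (r (m + 1) - k m)).eval (Sfun d a (m + 1) x)) :=
      Adm_polyS a _ hm
    have h2 : Adm d ((pd (m + 1))^[k m] (Pnest d a r k m)) :=
      (ih (by omega)).iterate_pd hm (k m)
    exact (h1.mul h2).congr (fun x => by simp only [Pnest]; rw [Hpoly_eq])

lemma pd_const (j : ℕ) (c : ℝ) : pd j (fun _ => c) = fun _ => 0 := by
  funext x; simp [pd]

lemma iter_pd_zero (j : ℕ) (k : ℕ) : (pd j)^[k] (fun _ => (0:ℝ)) = fun _ => 0 := by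
  induction k with
  | zero => rfl
  | succ k ih => rw [Function.iterate_succ_apply, pd_const]; exact ih

lemma iter_pd_one (j : ℕ) (k : ℕ) : (pd j)^[k + 1] (fun _ => (1:ℝ)) = fun _ => 0 := by
  rw [Function.iterate_succ_apply, pd_const]
  exact iter_pd_zero j k

variable {d : ℕ} {a : ℕ → ℕ → ℝ}

lemma chain (hsymm : ∀ i < d, ∀ j < d, a i j = a j i) (hpos : ∀ i < d, 0 < a i i)
    (r : ℕ → ℕ) :
    ∀ m, m + 1 ≤ d →
      creationChain r (m + 1) (fun y => Real.exp (-(Qform d a y)))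
        = fun x => (∏ i ∈ Finset.range (m + 1), (1 + a i i) ^ ((r i : ℝ) / 2)) *
            ∑ k ∈ Fintype.piFinset (fun i : Fin m => Finset.range (r (i.1 + 1) + 1)),
              (∏ i ∈ Finset.range m,
                  (-1 : ℝ) ^ (extF m k i) *
                    (1 + a (i + 1) (i + 1)) ^ (-(extF m k i : ℝ) / 2) *
                    ((r (i + 1)).choose (extF m k i) : ℝ)) *
                Pnest d a r (extF m k) m x * Real.exp (-(Qform d a x)) := by
  intro m
  induction m with
  | zero =>
    intro h1
    have h0d : 0 < d := by omega
    have hg : (fun y => Real.exp (-(Qform d a y)))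
        = fun y => (fun _ : ℕ → ℝ => (1:ℝ)) y * Real.exp (-(Qform d a y)) := by
      funext y; rw [one_mul]
    show (creation 0)^[r 0] (creationChain r 0 (fun y => Real.exp (-(Qform d a y)))) = _
    show (creation 0)^[r 0] (fun y => Real.exp (-(Qform d a y))) = _
    rw [hg, iter_creation hsymm hpos h0d (Adm.const 1) (r 0)]
    funext x
    have hpi : Fintype.piFinset (fun i : Fin 0 => Finset.range (r (i.1 + 1) + 1))
        = {fun i : Fin 0 => i.elim0} := by
      ext f
      simp only [Fintype.mem_piFinset, Finset.mem_singleton]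
      constructor
      · intro _; funext i; exact i.elim0
      · intro _ i; exact i.elim0
    rw [hpi, Finset.sum_singleton]
    rw [Finset.sum_eq_single_of_mem 0 (Finset.mem_range.mpr (by omega))
      (fun b _ hb => ?_)]
    · simp only [Function.iterate_zero_apply, Nat.choose_zero_right, Nat.cast_one,
        pow_zero, Nat.sub_zero, one_mul, Finset.prod_range_zero, Finset.prod_range_one]
      simp only [Pnest]
      rw [Hpoly_eq, Finset.prod_range_one]
    · obtain ⟨b', rfl⟩ := Nat.exists_eq_succ_of_ne_zero hb
      rw [iter_pd_one]
      simp
  | succ m ih =>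
    intro hm2
    have hmd : m < d := by omega
    have hm1d : m + 1 < d := by omega
    have hc : (0:ℝ) < 1 + a (m + 1) (m + 1) := by have := hpos (m + 1) hm1d; linarith
    show (creation (m + 1))^[r (m + 1)]
        (creationChain r (m + 1) (fun y => Real.exp (-(Qform d a y)))) = _
    rw [ih (by omega)]
    set cf : (Fin m → ℕ) → ℝ := fun k =>
      (∏ i ∈ Finset.range (m + 1), (1 + a i i) ^ ((r i : ℝ) / 2)) *
        ∏ i ∈ Finset.range m, (-1 : ℝ) ^ (extF m k i) *
          (1 + a (i + 1) (i + 1)) ^ (-(extF m k i : ℝ) / 2) *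
          ((r (i + 1)).choose (extF m k i) : ℝ) with hcf
    have hinner : (fun x => (∏ i ∈ Finset.range (m + 1), (1 + a i i) ^ ((r i : ℝ) / 2)) *
            ∑ k ∈ Fintype.piFinset (fun i : Fin m => Finset.range (r (i.1 + 1) + 1)),
              (∏ i ∈ Finset.range m, (-1 : ℝ) ^ (extF m k i) *
                    (1 + a (i + 1) (i + 1)) ^ (-(extF m k i : ℝ) / 2) *
                    ((r (i + 1)).choose (extF m k i) : ℝ)) *
                Pnest d a r (extF m k) m x * Real.exp (-(Qform d a x)))
        = fun y => (∑ k ∈ Fintype.piFinset (fun i : Fin m => Finset.range (r (i.1 + 1) + 1)),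
              cf k * Pnest d a r (extF m k) m y) * Real.exp (-(Qform d a y)) := by
      funext y
      rw [Finset.sum_mul, Finset.mul_sum]
      refine Finset.sum_congr rfl fun k _ => ?_
      rw [hcf]
      ring
    rw [hinner]
    have hAdmP : ∀ k ∈ Fintype.piFinset (fun i : Fin m => Finset.range (r (i.1 + 1) + 1)),
        Adm d (Pnest d a r (extF m k) m) := fun k _ => Adm_Pnest a r (extF m k) m hmd
    have hPbig : Adm d (fun y =>
        ∑ k ∈ Fintype.piFinset (fun i : Fin m => Finset.range (r (i.1 + 1) + 1)),
          cf k * Pnest d a r (extF m k) m y) :=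
      Adm.sum _ _ (fun k hk => ((Adm.const (cf k)).mul (hAdmP k hk)))
    rw [iter_creation hsymm hpos hm1d hPbig (r (m + 1))]
    funext x
    have hiter := pd_iter_sum (d := d)
      (Fintype.piFinset (fun i : Fin m => Finset.range (r (i.1 + 1) + 1)))
      (fun k => Pnest d a r (extF m k) m) hm1d hAdmP cf
    rw [Finset.prod_range_succ, sum_piFinset_succ m (fun n => r (n + 1) + 1),
      Finset.mul_sum]
    refine Finset.sum_congr rfl fun t ht => ?_
    have htR : t ≤ r (m + 1) := Nat.lt_succ_iff.mp (Finset.mem_range.mp ht)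
    rw [congrFun (hiter t) x, Finset.sum_mul, Finset.mul_sum, Finset.mul_sum]
    refine Finset.sum_congr rfl fun k hk => ?_
    beta_reduce
    have hco : (∏ i ∈ Finset.range (m + 1),
        (-1 : ℝ) ^ (extF (m + 1) (Fin.snoc k t) i) *
          (1 + a (i + 1) (i + 1)) ^ (-(extF (m + 1) (Fin.snoc k t) i : ℝ) / 2) *
          ((r (i + 1)).choose (extF (m + 1) (Fin.snoc k t) i) : ℝ))
        = (∏ i ∈ Finset.range m,
            (-1 : ℝ) ^ (extF m k i) *
              (1 + a (i + 1) (i + 1)) ^ (-(extF m k i : ℝ) / 2) *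
              ((r (i + 1)).choose (extF m k i) : ℝ)) *
          ((-1 : ℝ) ^ t * (1 + a (m + 1) (m + 1)) ^ (-(t : ℝ) / 2) *
            ((r (m + 1)).choose t : ℝ)) := by
      rw [Finset.prod_range_succ, extF_snoc_last]
      congr 1
      refine Finset.prod_congr rfl fun i hi => ?_
      rw [extF_snoc_lt m k t (Finset.mem_range.mp hi)]
    have hPn : Pnest d a r (extF (m + 1) (Fin.snoc k t)) (m + 1) x
        = (hermP (r (m + 1) - t)).eval (Sfun d a (m + 1) x) *
            ((pd (m + 1))^[t] (Pnest d a r (extF m k) m)) x := by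
      simp only [Pnest]
      rw [extF_snoc_last,
        Pnest_congr d a r m (fun i hi => extF_snoc_lt m k t hi), Hpoly_eq]
    rw [hco, hPn]
    have hexp : (1 + a (m + 1) (m + 1)) ^ (((r (m + 1) - t : ℕ) : ℝ) / 2)
        = (1 + a (m + 1) (m + 1)) ^ ((r (m + 1) : ℝ) / 2) *
          (1 + a (m + 1) (m + 1)) ^ (-(t : ℝ) / 2) := by
      rw [← Real.rpow_add hc]
      congr 1
      rw [Nat.cast_sub htR]
      ring
    rw [hexp, hcf]
    ring


end StmtAux

theorem stmt0 (d : ℕ) (hd : 2 ≤ d) (a : ℕ → ℕ → ℝ)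
    (hpos : ∀ i < d, 0 < a i i)
    (hsymm : ∀ i < d, ∀ j < d, a i j = a j i)
    (r : ℕ → ℕ) (x : ℕ → ℝ) :
    creationChain r d (fun y => Real.exp (-(Qform d a y))) x
      = (∏ i ∈ Finset.range d, (1 + a i i) ^ ((r i : ℝ)/2)) *
        ∑ k ∈ Fintype.piFinset (fun i : Fin (d - 1) => Finset.range (r (i.1 + 1) + 1)),
          (∏ i ∈ Finset.range (d - 1),
              (-1 : ℝ) ^ (ext d k i) *
                (1 + a (i + 1) (i + 1)) ^ (-(ext d k i : ℝ)/2) *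
                ((r (i + 1)).choose (ext d k i) : ℝ)) *
            Pnest d a r (ext d k) (d - 1) x * Real.exp (-(Qform d a x)) := by
  have H := StmtAux.chain (d := d) (a := a) hsymm hpos r (d - 1) (by omega)
  have hd1 : d - 1 + 1 = d := by omega
  rw [hd1] at H
  have hx := congrFun H x
  have hext : ∀ k : Fin (d - 1) → ℕ, StmtAux.extF (d - 1) k = ext d k := fun k => rfl
  simpa [hext] using hx
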